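/- Let a, b, c ∈ ℝ and φ(x,y) = x²y − y³ + ax + by + cy². Suppose φ has four pairwise distinct critical points in ℝ², each of which is nondegenerate. Then these are all the critical points of φ; exactly three of them have Morse index 1 (saddle points) and the remaining one has Morse index 0 or 2 (a local extremum); the three saddle points are not collinear, and the extremum point lies in the interior of the triangle whose vertices are the three saddle points. -/

import Mathlib

open MvPolynomial Matrix

/-- The Hessian matrix of a polynomial in two real variables at a point. -/
noncomputable def hess2 (f : MvPolynomial (Fin 2) ℝ) (p : Fin 2 → ℝ) :
    Matrix (Fin 2) (Fin 2) ℝ :=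
  Matrix.of fun i j => eval p (pderiv i (pderiv j f))

/-- A point of ℝ² is a critical point of a polynomial in two variables if both
partial derivatives vanish there. -/
def IsCriticalPt2 (f : MvPolynomial (Fin 2) ℝ) (p : Fin 2 → ℝ) : Prop :=
  ∀ i, eval p (pderiv i f) = 0

/-- The Morse index at a point: the number of negative eigenvalues (with multiplicity)
of the Hessian matrix there (junk value 0 if the Hessian is not symmetric). -/
noncomputable def morseIndex2 (f : MvPolynomial (Fin 2) ℝ) (p : Fin 2 → ℝ) : ℕ :=
  if h : (hess2 f p).IsHermitian then {i : Fin 2 | h.eigenvalues i < 0}.ncard else 0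

/-- The polynomial φ(x,y) = x²y − y³ + ax + by + cy². -/
noncomputable def phiMinus (a b c : ℝ) : MvPolynomial (Fin 2) ℝ :=
  X 0 ^ 2 * X 1 - X 1 ^ 3 + C a * X 0 + C b * X 1 + C c * X 1 ^ 2

/-! ### Auxiliary lemmas -/

lemma PM4.pderiv_two (i : Fin 2) : pderiv i (2 : MvPolynomial (Fin 2) ℝ) = 0 := by
  rw [show (2 : MvPolynomial (Fin 2) ℝ) = C 2 from (map_ofNat C 2).symm, pderiv_C]

lemma PM4.pderiv_three (i : Fin 2) : pderiv i (3 : MvPolynomial (Fin 2) ℝ) = 0 := by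
  rw [show (3 : MvPolynomial (Fin 2) ℝ) = C 3 from (map_ofNat C 3).symm, pderiv_C]

lemma PM4.evalpd0 (a b c : ℝ) (q : Fin 2 → ℝ) :
    eval q (pderiv 0 (phiMinus a b c)) = 2 * q 0 * q 1 + a := by
  simp [phiMinus, PM4.pderiv_two, PM4.pderiv_three, pderiv_mul, pderiv_pow, pderiv_X, pderiv_C]
  ring

lemma PM4.evalpd1 (a b c : ℝ) (q : Fin 2 → ℝ) :
    eval q (pderiv 1 (phiMinus a b c)) = q 0 ^ 2 - 3 * q 1 ^ 2 + b + 2 * c * q 1 := by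
  simp [phiMinus, PM4.pderiv_two, PM4.pderiv_three, pderiv_mul, pderiv_pow, pderiv_X, pderiv_C]
  ring

lemma PM4.crit1 {a b c : ℝ} {q : Fin 2 → ℝ} (hq : IsCriticalPt2 (phiMinus a b c) q) :
    2 * q 0 * q 1 + a = 0 := by
  have := hq 0; rwa [PM4.evalpd0] at this

lemma PM4.crit2 {a b c : ℝ} {q : Fin 2 → ℝ} (hq : IsCriticalPt2 (phiMinus a b c) q) :
    q 0 ^ 2 - 3 * q 1 ^ 2 + b + 2 * c * q 1 = 0 := by
  have := hq 1; rwa [PM4.evalpd1] at this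

lemma PM4.hessval (a b c : ℝ) (q : Fin 2 → ℝ) :
    hess2 (phiMinus a b c) q = !![2 * q 1, 2 * q 0; 2 * q 0, 2 * c - 6 * q 1] := by
  ext i j
  fin_cases i <;> fin_cases j <;>
    (simp [hess2, phiMinus, PM4.pderiv_two, PM4.pderiv_three, pderiv_mul, pderiv_pow,
      pderiv_X, pderiv_C]; try ring)

lemma PM4.hessherm (a b c : ℝ) (q : Fin 2 → ℝ) : (hess2 (phiMinus a b c) q).IsHermitian := by
  rw [PM4.hessval, Matrix.IsHermitian]
  ext i j
  fin_cases i <;> fin_cases j <;> simp [Matrix.conjTranspose_apply]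

lemma PM4.hessdet (a b c : ℝ) (q : Fin 2 → ℝ) :
    (hess2 (phiMinus a b c) q).det = 2 * q 1 * (2 * c - 6 * q 1) - 4 * q 0 ^ 2 := by
  rw [PM4.hessval, Matrix.det_fin_two_of]; ring

lemma PM4.det_crit {a b c : ℝ} {q : Fin 2 → ℝ} (hq : IsCriticalPt2 (phiMinus a b c) q) :
    (hess2 (phiMinus a b c) q).det = 4 * (b + 3 * c * q 1 - 6 * (q 1) ^ 2) := by
  rw [PM4.hessdet]
  linear_combination (-4 : ℝ) * PM4.crit2 hq

lemma PM4.morse_neg (f : MvPolynomial (Fin 2) ℝ) (q : Fin 2 → ℝ)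
    (hh : (hess2 f q).IsHermitian) (hd : (hess2 f q).det < 0) : morseIndex2 f q = 1 := by
  rw [morseIndex2, dif_pos hh]
  have hprod : (hess2 f q).det = hh.eigenvalues 0 * hh.eigenvalues 1 := by
    rw [hh.det_eq_prod_eigenvalues, Fin.prod_univ_two]; norm_num
  rw [hprod] at hd
  rcases lt_or_ge (hh.eigenvalues 0) 0 with h0 | h0
  · have h1 : 0 < hh.eigenvalues 1 := by nlinarith
    have : {i : Fin 2 | hh.eigenvalues i < 0} = {0} := by
      ext i; fin_cases i <;> simp [h0, h1, not_lt.mpr h1.le]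
    rw [this, Set.ncard_singleton]
  · have h1 : hh.eigenvalues 1 < 0 := by nlinarith
    have h0' : 0 < hh.eigenvalues 0 := by nlinarith
    have : {i : Fin 2 | hh.eigenvalues i < 0} = {1} := by
      ext i; fin_cases i <;> simp [h1, not_lt.mpr h0'.le]
    rw [this, Set.ncard_singleton]

lemma PM4.morse_pos (f : MvPolynomial (Fin 2) ℝ) (q : Fin 2 → ℝ)
    (hh : (hess2 f q).IsHermitian) (hd : 0 < (hess2 f q).det) :
    morseIndex2 f q = 0 ∨ morseIndex2 f q = 2 := by
  rw [morseIndex2, dif_pos hh]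
  have hprod : (hess2 f q).det = hh.eigenvalues 0 * hh.eigenvalues 1 := by
    rw [hh.det_eq_prod_eigenvalues, Fin.prod_univ_two]; norm_num
  rw [hprod] at hd
  rcases lt_or_ge (hh.eigenvalues 0) 0 with h0 | h0
  · have h1 : hh.eigenvalues 1 < 0 := by nlinarith
    right
    have : {i : Fin 2 | hh.eigenvalues i < 0} = Set.univ := by
      ext i; fin_cases i <;> simp [h0, h1]
    rw [this, Set.ncard_univ]; simp
  · have h0' : 0 < hh.eigenvalues 0 := by
      rcases h0.lt_or_eq with h | h
      · exact h
      · exfalso; rw [← h, zero_mul] at hd; exact lt_irrefl 0 hd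
    have h1 : 0 < hh.eigenvalues 1 := by nlinarith
    left
    have : {i : Fin 2 | hh.eigenvalues i < 0} = ∅ := by
      ext i; fin_cases i <;> simp [not_lt.mpr h0'.le, not_lt.mpr h1.le]
    rw [this, Set.ncard_empty]

lemma PM4.pt_eq {q r : Fin 2 → ℝ} (h0 : q 0 = r 0) (h1 : q 1 = r 1) : q = r := by
  funext i; fin_cases i <;> assumption

/-- The triangle conclusion for one ordered triple of vertices. -/
abbrev PM4Good (P u v w : Fin 2 → ℝ) : Prop :=
  ¬ Collinear ℝ ({u, v, w} : Set (Fin 2 → ℝ)) ∧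
  ∃ t₁ t₂ t₃ : ℝ, 0 < t₁ ∧ 0 < t₂ ∧ 0 < t₃ ∧ t₁ + t₂ + t₃ = 1 ∧
    P = t₁ • u + t₂ • v + t₃ • w

lemma PM4.not_collinear_of_cross {u v w : Fin 2 → ℝ}
    (h : (v 0 - u 0) * (w 1 - u 1) - (v 1 - u 1) * (w 0 - u 0) ≠ 0) :
    ¬ Collinear ℝ ({u, v, w} : Set (Fin 2 → ℝ)) := by
  intro hc
  rw [collinear_iff_exists_forall_eq_smul_vadd] at hc
  obtain ⟨p₀, d, hd⟩ := hc
  obtain ⟨r1, hr1⟩ := hd u (by simp)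
  obtain ⟨r2, hr2⟩ := hd v (by simp)
  obtain ⟨r3, hr3⟩ := hd w (by simp)
  apply h
  have e1 : ∀ i, u i = r1 * d i + p₀ i := fun i => by rw [hr1]; rfl
  have e2 : ∀ i, v i = r2 * d i + p₀ i := fun i => by rw [hr2]; rfl
  have e3 : ∀ i, w i = r3 * d i + p₀ i := fun i => by rw [hr3]; rfl
  rw [e1 0, e1 1, e2 0, e2 1, e3 0, e3 1]; ring

lemma PM4.good_swap12 {P u v w : Fin 2 → ℝ} (h : PM4Good P u v w) : PM4Good P v u w := by
  obtain ⟨hc, t1, t2, t3, h1, h2, h3, hs, he⟩ := h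
  exact ⟨by rwa [Set.insert_comm], t2, t1, t3, h2, h1, h3, by linarith,
    by rw [he]; abel⟩

lemma PM4.good_swap23 {P u v w : Fin 2 → ℝ} (h : PM4Good P u v w) : PM4Good P u w v := by
  obtain ⟨hc, t1, t2, t3, h1, h2, h3, hs, he⟩ := h
  exact ⟨by rwa [Set.pair_comm v w] at hc, t1, t3, t2, h1, h3, h2, by linarith,
    by rw [he]; abel⟩

/-- The triangle conclusion in the case `a = 0`: extremum `(0,v)`, saddles
`(x,0)`, `(-x,0)`, `(0,w)`. -/
lemma PM4.vert_good {x v w : ℝ} {U R S W : Fin 2 → ℝ}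
    (hU0 : U 0 = 0) (hU1 : U 1 = v) (hR0 : R 0 = x) (hR1 : R 1 = 0)
    (hS0 : S 0 = -x) (hS1 : S 1 = 0) (hW0 : W 0 = 0) (hW1 : W 1 = w)
    (hx : x ≠ 0) (hw : w ≠ 0) (h1 : 0 < v / w) (h2 : v / w < 1) :
    PM4Good U R S W := by
  constructor
  · apply PM4.not_collinear_of_cross
    rw [hR0, hR1, hS0, hS1, hW0, hW1]
    have : (-x - x) * (w - 0) - (0 - 0) * (0 - x) = (-2 * x) * w := by ring
    rw [this]
    exact mul_ne_zero (by simpa using hx) hw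
  · refine ⟨(1 - v / w) / 2, (1 - v / w) / 2, v / w, by linarith, by linarith, h1, by ring, ?_⟩
    apply PM4.pt_eq <;>
      simp only [Pi.add_apply, Pi.smul_apply, smul_eq_mul]
    · rw [hU0, hR0, hS0, hW0]; ring
    · rw [hU1, hR1, hS1, hW1]; field_simp; ring

/-- The triangle conclusion in the case `a ≠ 0`: four points on the hyperbola
`xy = κ`, with second coordinates `u` (extremum), `r`, `s`, `w` (saddles). -/
lemma PM4.hyper_good {κ u r s w : ℝ} {U R S W : Fin 2 → ℝ}
    (hU0 : U 0 = κ / u) (hU1 : U 1 = u) (hR0 : R 0 = κ / r) (hR1 : R 1 = r)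
    (hS0 : S 0 = κ / s) (hS1 : S 1 = s) (hW0 : W 0 = κ / w) (hW1 : W 1 = w)
    (hκ : κ ≠ 0) (hu : u ≠ 0) (hr : r ≠ 0) (hs : s ≠ 0) (hw : w ≠ 0)
    (hrs : r - s ≠ 0) (hrw : r - w ≠ 0) (hsw : s - w ≠ 0)
    (t1 : 0 < r * (u - s) * (u - w) / (u * (r - s) * (r - w)))
    (t2 : 0 < s * (u - r) * (u - w) / (u * (s - r) * (s - w)))
    (t3 : 0 < w * (u - r) * (u - s) / (u * (w - r) * (w - s))) :
    PM4Good U R S W := by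
  constructor
  · apply PM4.not_collinear_of_cross
    rw [hR0, hR1, hS0, hS1, hW0, hW1]
    have : (κ / s - κ / r) * (w - r) - (s - r) * (κ / w - κ / r)
        = κ * (r - s) * (r - w) * (s - w) / (r * s * w) := by
      field_simp; ring
    rw [this]
    exact div_ne_zero (mul_ne_zero (mul_ne_zero (mul_ne_zero hκ hrs) hrw) hsw)
      (mul_ne_zero (mul_ne_zero hr hs) hw)
  · have hsr : s - r ≠ 0 := fun h => hrs (by linarith)
    have hwr : w - r ≠ 0 := fun h => hrw (by linarith)
    have hws : w - s ≠ 0 := fun h => hsw (by linarith)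
    refine ⟨_, _, _, t1, t2, t3, ?_, ?_⟩
    · field_simp
      ring
    · apply PM4.pt_eq <;>
        simp only [Pi.add_apply, Pi.smul_apply, smul_eq_mul]
      · rw [hU0, hR0, hS0, hW0]
        field_simp
        ring
      · rw [hU1, hR1, hS1, hW1]
        field_simp
        ring

/-- A cubic polynomial function vanishing at four distinct points is zero. -/
lemma PM4.cubic_vanish {α β γ δ y0 y1 y2 y3 : ℝ}
    (h01 : y0 ≠ y1) (h02 : y0 ≠ y2) (h03 : y0 ≠ y3)
    (h12 : y1 ≠ y2) (h13 : y1 ≠ y3) (h23 : y2 ≠ y3)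
    (e0 : α * y0 ^ 3 + β * y0 ^ 2 + γ * y0 + δ = 0)
    (e1 : α * y1 ^ 3 + β * y1 ^ 2 + γ * y1 + δ = 0)
    (e2 : α * y2 ^ 3 + β * y2 ^ 2 + γ * y2 + δ = 0)
    (e3 : α * y3 ^ 3 + β * y3 ^ 2 + γ * y3 + δ = 0) :
    α = 0 ∧ β = 0 ∧ γ = 0 ∧ δ = 0 := by
  have d01 := sub_ne_zero.mpr h01
  have d02 := sub_ne_zero.mpr h02
  have d03 := sub_ne_zero.mpr h03
  have d12 := sub_ne_zero.mpr h12
  have d13 := sub_ne_zero.mpr h13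
  have d23 := sub_ne_zero.mpr h23
  have g1 : α * (y0 ^ 2 + y0 * y1 + y1 ^ 2) + β * (y0 + y1) + γ = 0 := by
    have h : (y0 - y1) * (α * (y0 ^ 2 + y0 * y1 + y1 ^ 2) + β * (y0 + y1) + γ) = 0 := by
      linear_combination e0 - e1
    exact (mul_eq_zero.mp h).resolve_left d01
  have g2 : α * (y0 ^ 2 + y0 * y2 + y2 ^ 2) + β * (y0 + y2) + γ = 0 := by
    have h : (y0 - y2) * (α * (y0 ^ 2 + y0 * y2 + y2 ^ 2) + β * (y0 + y2) + γ) = 0 := by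
      linear_combination e0 - e2
    exact (mul_eq_zero.mp h).resolve_left d02
  have g3 : α * (y0 ^ 2 + y0 * y3 + y3 ^ 2) + β * (y0 + y3) + γ = 0 := by
    have h : (y0 - y3) * (α * (y0 ^ 2 + y0 * y3 + y3 ^ 2) + β * (y0 + y3) + γ) = 0 := by
      linear_combination e0 - e3
    exact (mul_eq_zero.mp h).resolve_left d03
  have f1 : α * (y0 + y1 + y2) + β = 0 := by
    have h : (y1 - y2) * (α * (y0 + y1 + y2) + β) = 0 := by
      linear_combination g1 - g2
    exact (mul_eq_zero.mp h).resolve_left d12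
  have f2 : α * (y0 + y1 + y3) + β = 0 := by
    have h : (y1 - y3) * (α * (y0 + y1 + y3) + β) = 0 := by
      linear_combination g1 - g3
    exact (mul_eq_zero.mp h).resolve_left d13
  have hα : α = 0 := by
    have h : (y2 - y3) * α = 0 := by linear_combination f1 - f2
    exact (mul_eq_zero.mp h).resolve_left d23
  have hβ : β = 0 := by linear_combination f1 - (y0 + y1 + y2) * hα
  have hγ : γ = 0 := by
    linear_combination g1 - (y0 ^ 2 + y0 * y1 + y1 ^ 2) * hα - (y0 + y1) * hβ
  have hδ : δ = 0 := by
    linear_combination e0 - y0 ^ 3 * hα - y0 ^ 2 * hβ - y0 * hγ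
  exact ⟨hα, hβ, hγ, hδ⟩

/-- Sign extraction helpers. -/
lemma PM4.hneg_of_pos {z h R : ℝ} (hz : 0 < z) (hR : R < 0) (he : 2 * z * h = R) : h < 0 := by
  nlinarith
lemma PM4.hneg_of_neg {z h R : ℝ} (hz : z < 0) (hR : 0 < R) (he : 2 * z * h = R) : h < 0 := by
  nlinarith
lemma PM4.hpos_of_pos {z h R : ℝ} (hz : 0 < z) (hR : 0 < R) (he : 2 * z * h = R) : 0 < h := by
  nlinarith
lemma PM4.hpos_of_neg {z h R : ℝ} (hz : z < 0) (hR : R < 0) (he : 2 * z * h = R) : 0 < h := by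
  nlinarith

/-- Final assembly: from the structural data, derive the second component of the
conclusion of the main theorem. -/
lemma PM4.endgame (a b c : ℝ) (p : Fin 4 → Fin 2 → ℝ)
    (hcrit : ∀ k, IsCriticalPt2 (phiMinus a b c) (p k))
    (k s1 s2 s3 : Fin 4)
    (mem : ∀ i : Fin 4, i = k ∨ i = s1 ∨ i = s2 ∨ i = s3)
    (hvk : 0 < b + 3 * c * (p k 1) - 6 * (p k 1) ^ 2)
    (hv1 : b + 3 * c * (p s1 1) - 6 * (p s1 1) ^ 2 < 0)
    (hv2 : b + 3 * c * (p s2 1) - 6 * (p s2 1) ^ 2 < 0)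
    (hv3 : b + 3 * c * (p s3 1) - 6 * (p s3 1) ^ 2 < 0)
    (gd : PM4Good (p k) (p s1) (p s2) (p s3)) :
    (∃ k : Fin 4,
      (morseIndex2 (phiMinus a b c) (p k) = 0 ∨ morseIndex2 (phiMinus a b c) (p k) = 2) ∧
      (∀ l, l ≠ k → morseIndex2 (phiMinus a b c) (p l) = 1) ∧
      (∀ i₁ i₂ i₃ : Fin 4, i₁ ≠ i₂ → i₁ ≠ i₃ → i₂ ≠ i₃ →
        i₁ ≠ k → i₂ ≠ k → i₃ ≠ k →
        ¬ Collinear ℝ ({p i₁, p i₂, p i₃} : Set (Fin 2 → ℝ)) ∧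
        ∃ t₁ t₂ t₃ : ℝ, 0 < t₁ ∧ 0 < t₂ ∧ 0 < t₃ ∧ t₁ + t₂ + t₃ = 1 ∧
          p k = t₁ • p i₁ + t₂ • p i₂ + t₃ • p i₃)) := by
  refine ⟨k, ?_, ?_, ?_⟩
  · exact PM4.morse_pos _ _ (PM4.hessherm a b c (p k))
      (by rw [PM4.det_crit (hcrit k)]; linarith)
  · intro l hl
    have hdetl : ∀ i, b + 3 * c * (p i 1) - 6 * (p i 1) ^ 2 < 0 →
        morseIndex2 (phiMinus a b c) (p i) = 1 := fun i hi =>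
      PM4.morse_neg _ _ (PM4.hessherm a b c (p i))
        (by rw [PM4.det_crit (hcrit i)]; linarith)
    rcases mem l with rfl | rfl | rfl | rfl
    · exact absurd rfl hl
    · exact hdetl _ hv1
    · exact hdetl _ hv2
    · exact hdetl _ hv3
  · intro i₁ i₂ i₃ h12 h13 h23 hk1 hk2 hk3
    have g123 := gd
    have g213 := PM4.good_swap12 gd
    have g132 := PM4.good_swap23 gd
    have g231 := PM4.good_swap23 g213
    have g312 := PM4.good_swap12 g132
    have g321 := PM4.good_swap23 g312
    rcases mem i₁ with rfl | rfl | rfl | rfl <;>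
      rcases mem i₂ with rfl | rfl | rfl | rfl <;>
        rcases mem i₃ with rfl | rfl | rfl | rfl <;>
          first
          | exact absurd rfl hk1
          | exact absurd rfl hk2
          | exact absurd rfl hk3
          | exact absurd rfl h12
          | exact absurd rfl h13
          | exact absurd rfl h23
          | exact g123
          | exact g213
          | exact g132
          | exact g231
          | exact g312
          | exact g321

set_option maxHeartbeats 2000000 in
/-- If φ(x,y) = x²y − y³ + ax + by + cy² has four pairwise distinct nondegenerate
critical points, then these are all its critical points; exactly three of them are
saddles (index 1) and the remaining one is a local extremum (index 0 or 2); the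
three saddles are not collinear, and the extremum lies in the interior of the
triangle spanned by the saddles. -/
theorem phiMinus_four_critical_points (a b c : ℝ)
    (p : Fin 4 → (Fin 2 → ℝ)) (hinj : Function.Injective p)
    (hcrit : ∀ k, IsCriticalPt2 (phiMinus a b c) (p k))
    (hnd : ∀ k, (hess2 (phiMinus a b c) (p k)).det ≠ 0) :
    (∀ q, IsCriticalPt2 (phiMinus a b c) q → ∃ k, q = p k) ∧
    (∃ k : Fin 4,
      (morseIndex2 (phiMinus a b c) (p k) = 0 ∨ morseIndex2 (phiMinus a b c) (p k) = 2) ∧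
      (∀ l, l ≠ k → morseIndex2 (phiMinus a b c) (p l) = 1) ∧
      (∀ i₁ i₂ i₃ : Fin 4, i₁ ≠ i₂ → i₁ ≠ i₃ → i₂ ≠ i₃ →
        i₁ ≠ k → i₂ ≠ k → i₃ ≠ k →
        ¬ Collinear ℝ ({p i₁, p i₂, p i₃} : Set (Fin 2 → ℝ)) ∧
        ∃ t₁ t₂ t₃ : ℝ, 0 < t₁ ∧ 0 < t₂ ∧ 0 < t₃ ∧ t₁ + t₂ + t₃ = 1 ∧
          p k = t₁ • p i₁ + t₂ • p i₂ + t₃ • p i₃)) := by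
  classical
  have hc1 : ∀ k, 2 * p k 0 * p k 1 + a = 0 := fun k => PM4.crit1 (hcrit k)
  have hc2 : ∀ k, p k 0 ^ 2 - 3 * p k 1 ^ 2 + b + 2 * c * p k 1 = 0 := fun k =>
    PM4.crit2 (hcrit k)
  by_cases ha : a = 0
  · -- case a = 0
    subst ha
    have hxy : ∀ k, p k 0 * p k 1 = 0 := fun k => by linarith [hc1 k]
    set T : Finset (Fin 4) := Finset.univ.filter (fun k => p k 1 = 0) with hTdef
    have hTle : T.card ≤ 2 := by
      by_contra hgt
      obtain ⟨u1, u2, u3, m1, m2, m3, n12, n13, n23⟩ :=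
        Finset.two_lt_card_iff.mp (show 2 < T.card by omega)
      have y1 : p u1 1 = 0 := (Finset.mem_filter.mp m1).2
      have y2 : p u2 1 = 0 := (Finset.mem_filter.mp m2).2
      have y3 : p u3 1 = 0 := (Finset.mem_filter.mp m3).2
      have q1 : p u1 0 ^ 2 + b = 0 := by
        have h := hc2 u1; rw [y1] at h; linear_combination h
      have q2 : p u2 0 ^ 2 + b = 0 := by
        have h := hc2 u2; rw [y2] at h; linear_combination h
      have q3 : p u3 0 ^ 2 + b = 0 := by
        have h := hc2 u3; rw [y3] at h; linear_combination h
      have x12 : p u1 0 ≠ p u2 0 := fun h =>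
        n12 (hinj (PM4.pt_eq h (by rw [y1, y2])))
      have x13 : p u1 0 ≠ p u3 0 := fun h =>
        n13 (hinj (PM4.pt_eq h (by rw [y1, y3])))
      have x23 : p u2 0 ≠ p u3 0 := fun h =>
        n23 (hinj (PM4.pt_eq h (by rw [y2, y3])))
      have s2 : p u2 0 = -(p u1 0) := by
        have h : (p u1 0 - p u2 0) * (p u1 0 + p u2 0) = 0 := by linear_combination q1 - q2
        have := (mul_eq_zero.mp h).resolve_left (sub_ne_zero.mpr x12); linarith
      have s3 : p u3 0 = -(p u1 0) := by
        have h : (p u1 0 - p u3 0) * (p u1 0 + p u3 0) = 0 := by linear_combination q1 - q3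
        have := (mul_eq_zero.mp h).resolve_left (sub_ne_zero.mpr x13); linarith
      exact x23 (s2.trans s3.symm)
    have hTcle : Tᶜ.card ≤ 2 := by
      by_contra hgt
      obtain ⟨u1, u2, u3, m1, m2, m3, n12, n13, n23⟩ :=
        Finset.two_lt_card_iff.mp (show 2 < Tᶜ.card by omega)
      have y1 : p u1 1 ≠ 0 := by have := m1; simp [hTdef] at this; exact this
      have y2 : p u2 1 ≠ 0 := by have := m2; simp [hTdef] at this; exact this
      have y3 : p u3 1 ≠ 0 := by have := m3; simp [hTdef] at this; exact this
      have x1 : p u1 0 = 0 := (mul_eq_zero.mp (hxy u1)).resolve_right y1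
      have x2 : p u2 0 = 0 := (mul_eq_zero.mp (hxy u2)).resolve_right y2
      have x3 : p u3 0 = 0 := (mul_eq_zero.mp (hxy u3)).resolve_right y3
      have yn12 : p u1 1 ≠ p u2 1 := fun h =>
        n12 (hinj (PM4.pt_eq (x1.trans x2.symm) h))
      have yn13 : p u1 1 ≠ p u3 1 := fun h =>
        n13 (hinj (PM4.pt_eq (x1.trans x3.symm) h))
      have yn23 : p u2 1 ≠ p u3 1 := fun h =>
        n23 (hinj (PM4.pt_eq (x2.trans x3.symm) h))
      have r1 : -3 * (p u1 1) ^ 2 + b + 2 * c * (p u1 1) = 0 := by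
        have h := hc2 u1; rw [x1] at h; linear_combination h
      have r2 : -3 * (p u2 1) ^ 2 + b + 2 * c * (p u2 1) = 0 := by
        have h := hc2 u2; rw [x2] at h; linear_combination h
      have r3 : -3 * (p u3 1) ^ 2 + b + 2 * c * (p u3 1) = 0 := by
        have h := hc2 u3; rw [x3] at h; linear_combination h
      have s12 : 3 * (p u1 1 + p u2 1) = 2 * c := by
        have h : (p u1 1 - p u2 1) * (3 * (p u1 1 + p u2 1) - 2 * c) = 0 := by
          linear_combination r2 - r1
        have := (mul_eq_zero.mp h).resolve_left (sub_ne_zero.mpr yn12); linarith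
      have s13 : 3 * (p u1 1 + p u3 1) = 2 * c := by
        have h : (p u1 1 - p u3 1) * (3 * (p u1 1 + p u3 1) - 2 * c) = 0 := by
          linear_combination r3 - r1
        have := (mul_eq_zero.mp h).resolve_left (sub_ne_zero.mpr yn13); linarith
      exact yn23 (by linarith)
    have hsplit : T.card + Tᶜ.card = 4 := by
      rw [Finset.card_add_card_compl]; simp
    obtain ⟨k1, k2, hk12, hTeq⟩ := Finset.card_eq_two.mp (by omega : T.card = 2)
    obtain ⟨k3, k4, hk34, hTceq⟩ := Finset.card_eq_two.mp (by omega : Tᶜ.card = 2)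
    have hT1 : p k1 1 = 0 := by
      have : k1 ∈ T := by rw [hTeq]; exact Finset.mem_insert_self _ _
      exact (Finset.mem_filter.mp this).2
    have hT2 : p k2 1 = 0 := by
      have : k2 ∈ T := by rw [hTeq]; simp
      exact (Finset.mem_filter.mp this).2
    have hT3 : p k3 1 ≠ 0 := by
      have h : k3 ∈ Tᶜ := by rw [hTceq]; exact Finset.mem_insert_self _ _
      simp [hTdef] at h; exact h
    have hT4 : p k4 1 ≠ 0 := by
      have h : k4 ∈ Tᶜ := by rw [hTceq]; simp
      simp [hTdef] at h; exact h
    have x3 : p k3 0 = 0 := (mul_eq_zero.mp (hxy k3)).resolve_right hT3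
    have x4 : p k4 0 = 0 := (mul_eq_zero.mp (hxy k4)).resolve_right hT4
    have mem4 : ∀ i : Fin 4, i = k1 ∨ i = k2 ∨ i = k3 ∨ i = k4 := by
      intro i
      by_cases h : p i 1 = 0
      · have : i ∈ T := Finset.mem_filter.mpr ⟨Finset.mem_univ _, h⟩
        rw [hTeq] at this; simp at this; tauto
      · have hm : i ∈ Tᶜ := by simp [hTdef]; exact h
        rw [hTceq] at hm; simp at hm; tauto
    -- scalar facts
    have q1 : p k1 0 ^ 2 + b = 0 := by
      have h := hc2 k1; rw [hT1] at h; linear_combination h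
    have q2 : p k2 0 ^ 2 + b = 0 := by
      have h := hc2 k2; rw [hT2] at h; linear_combination h
    have x12 : p k1 0 ≠ p k2 0 := fun h =>
      hk12 (hinj (PM4.pt_eq h (by rw [hT1, hT2])))
    have hk2x : p k2 0 = -(p k1 0) := by
      have h : (p k1 0 - p k2 0) * (p k1 0 + p k2 0) = 0 := by linear_combination q1 - q2
      have := (mul_eq_zero.mp h).resolve_left (sub_ne_zero.mpr x12); linarith
    have hxne : p k1 0 ≠ 0 := by
      intro h
      exact x12 (by rw [hk2x, h, neg_zero])
    have hb : b = -(p k1 0) ^ 2 := by linear_combination q1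
    have hx2pos : 0 < (p k1 0) ^ 2 :=
      lt_of_le_of_ne (sq_nonneg _) (Ne.symm (pow_ne_zero 2 hxne))
    have r3 : -3 * (p k3 1) ^ 2 + b + 2 * c * (p k3 1) = 0 := by
      have h := hc2 k3; rw [x3] at h; linear_combination h
    have r4 : -3 * (p k4 1) ^ 2 + b + 2 * c * (p k4 1) = 0 := by
      have h := hc2 k4; rw [x4] at h; linear_combination h
    have hvw : p k3 1 ≠ p k4 1 := fun h =>
      hk34 (hinj (PM4.pt_eq (x3.trans x4.symm) h))
    have hsum : 3 * (p k3 1 + p k4 1) = 2 * c := by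
      have h : (p k3 1 - p k4 1) * (3 * (p k3 1 + p k4 1) - 2 * c) = 0 := by
        linear_combination r4 - r3
      have := (mul_eq_zero.mp h).resolve_left (sub_ne_zero.mpr hvw); linarith
    have hprodvw : 3 * (p k3 1 * p k4 1) = -b := by
      linear_combination r3 + (p k3 1) * hsum
    have hvwpos : 0 < p k3 1 * p k4 1 := by nlinarith
    have hval3eq : b + 3 * c * (p k3 1) - 6 * (p k3 1) ^ 2
        = -(3/2) * (p k3 1 * (p k3 1 - p k4 1)) := by
      linear_combination (-(3/2) * p k3 1) * hsum + hprodvw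
    have hval4eq : b + 3 * c * (p k4 1) - 6 * (p k4 1) ^ 2
        = -(3/2) * (p k4 1 * (p k4 1 - p k3 1)) := by
      linear_combination (-(3/2) * p k4 1) * hsum + hprodvw
    have hvwne : (0:ℝ) < (p k3 1 - p k4 1) ^ 2 :=
      lt_of_le_of_ne (sq_nonneg _) (Ne.symm (pow_ne_zero 2 (sub_ne_zero.mpr hvw)))
    have hprodneg : (b + 3 * c * (p k3 1) - 6 * (p k3 1) ^ 2) *
        (b + 3 * c * (p k4 1) - 6 * (p k4 1) ^ 2) < 0 := by
      rw [hval3eq, hval4eq]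
      nlinarith [mul_pos hvwpos hvwne]
    have hvalk1 : b + 3 * c * (p k1 1) - 6 * (p k1 1) ^ 2 < 0 := by
      rw [hT1]; nlinarith
    have hvalk2 : b + 3 * c * (p k2 1) - 6 * (p k2 1) ^ 2 < 0 := by
      rw [hT2]; nlinarith
    -- completeness
    have comp : ∀ q, IsCriticalPt2 (phiMinus 0 b c) q → ∃ k, q = p k := by
      intro q hq
      have hq1 := PM4.crit1 hq
      have hq2 := PM4.crit2 hq
      have hxyq : q 0 * q 1 = 0 := by linarith
      rcases mul_eq_zero.mp hxyq with h0 | h1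
      · have hfac : 3 * ((q 1 - p k3 1) * (q 1 - p k4 1)) = 0 := by
          linear_combination (-1) * hq2 + (-(q 1)) * hsum + hprodvw + (q 0) * h0
        have hfac' : (q 1 - p k3 1) * (q 1 - p k4 1) = 0 := by linarith
        rcases mul_eq_zero.mp hfac' with h | h
        · exact ⟨k3, PM4.pt_eq (h0.trans x3.symm) (by linarith)⟩
        · exact ⟨k4, PM4.pt_eq (h0.trans x4.symm) (by linarith)⟩
      · have hfac : (q 0 - p k1 0) * (q 0 + p k1 0) = 0 := by
          linear_combination hq2 + (-1) * hb + (3 * q 1 - 2 * c) * h1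
        rcases mul_eq_zero.mp hfac with h | h
        · exact ⟨k1, PM4.pt_eq (by linarith) (h1.trans hT1.symm)⟩
        · exact ⟨k2, PM4.pt_eq (by rw [hk2x]; linarith) (h1.trans hT2.symm)⟩
    refine ⟨comp, ?_⟩
    have hw2 : ∀ i : Fin 4, p i 1 ≠ 0 → 0 < (p i 1) ^ 2 := fun i hi =>
      lt_of_le_of_ne (sq_nonneg _) (Ne.symm (pow_ne_zero 2 hi))
    by_cases hv3pos : 0 < b + 3 * c * (p k3 1) - 6 * (p k3 1) ^ 2
    · -- extremum at k3
      have hval4neg : b + 3 * c * (p k4 1) - 6 * (p k4 1) ^ 2 < 0 := by nlinarith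
      have hdiv : 0 < p k3 1 / p k4 1 := by
        have h : p k3 1 / p k4 1 = (p k3 1 * p k4 1) / (p k4 1) ^ 2 := by
          field_simp
        rw [h]; exact div_pos hvwpos (hw2 k4 hT4)
      have hw34 : 0 < p k4 1 * (p k4 1 - p k3 1) := by nlinarith
      have hdiv1 : p k3 1 / p k4 1 < 1 := by
        have h : p k3 1 / p k4 1 - 1 = -(p k4 1 * (p k4 1 - p k3 1)) / (p k4 1) ^ 2 := by
          field_simp; ring
        have h2 : p k3 1 / p k4 1 - 1 < 0 := by
          rw [h]; exact div_neg_of_neg_of_pos (by linarith) (hw2 k4 hT4)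
        linarith
      have gd : PM4Good (p k3) (p k1) (p k2) (p k4) :=
        PM4.vert_good x3 rfl rfl hT1 hk2x hT2 x4 rfl hxne hT4 hdiv hdiv1
      have mem : ∀ i : Fin 4, i = k3 ∨ i = k1 ∨ i = k2 ∨ i = k4 := fun i => by
        rcases mem4 i with h | h | h | h <;> tauto
      exact PM4.endgame 0 b c p hcrit k3 k1 k2 k4 mem hv3pos hvalk1 hvalk2 hval4neg gd
    · -- extremum at k4
      have hval3neg : b + 3 * c * (p k3 1) - 6 * (p k3 1) ^ 2 < 0 := by
        rcases (not_lt.mp hv3pos).lt_or_eq with h | h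
        · exact h
        · exfalso; rw [h] at hprodneg; simp at hprodneg
      have hval4pos : 0 < b + 3 * c * (p k4 1) - 6 * (p k4 1) ^ 2 := by nlinarith
      have hvwpos' : 0 < p k4 1 * p k3 1 := by nlinarith
      have hdiv : 0 < p k4 1 / p k3 1 := by
        have h : p k4 1 / p k3 1 = (p k4 1 * p k3 1) / (p k3 1) ^ 2 := by
          field_simp
        rw [h]; exact div_pos hvwpos' (hw2 k3 hT3)
      have hw34 : 0 < p k3 1 * (p k3 1 - p k4 1) := by nlinarith
      have hdiv1 : p k4 1 / p k3 1 < 1 := by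
        have h : p k4 1 / p k3 1 - 1 = -(p k3 1 * (p k3 1 - p k4 1)) / (p k3 1) ^ 2 := by
          field_simp; ring
        have h2 : p k4 1 / p k3 1 - 1 < 0 := by
          rw [h]; exact div_neg_of_neg_of_pos (by linarith) (hw2 k3 hT3)
        linarith
      have gd : PM4Good (p k4) (p k1) (p k2) (p k3) :=
        PM4.vert_good x4 rfl rfl hT1 hk2x hT2 x3 rfl hxne hT3 hdiv hdiv1
      have mem : ∀ i : Fin 4, i = k4 ∨ i = k1 ∨ i = k2 ∨ i = k3 := fun i => by
        rcases mem4 i with h | h | h | h <;> tauto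
      exact PM4.endgame 0 b c p hcrit k4 k1 k2 k3 mem hval4pos hvalk1 hvalk2 hval3neg gd
  · -- case a ≠ 0
    have ha2 : 0 < a ^ 2 := lt_of_le_of_ne (sq_nonneg a) (Ne.symm (pow_ne_zero 2 ha))
    have hy0 : ∀ i, p i 1 ≠ 0 := fun i h => ha (by have := hc1 i; rw [h] at this; linarith)
    have hκ : -a / 2 ≠ 0 := fun h => ha (by linarith)
    have hcoord : ∀ i, p i 0 = (-a / 2) / (p i 1) := fun i => by
      rw [eq_div_iff (hy0 i)]; linarith [hc1 i]
    have hyinj : Function.Injective (fun i => p i 1) := by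
      intro i j h
      simp only at h
      exact hinj (PM4.pt_eq (by rw [hcoord i, hcoord j, h]) h)
    have hQ : ∀ i, 12 * (p i 1) ^ 4 - 8 * c * (p i 1) ^ 3 - 4 * b * (p i 1) ^ 2 - a ^ 2 = 0 :=
      fun i => by
        linear_combination (-4 * (p i 1) ^ 2) * hc2 i + (2 * p i 0 * p i 1 - a) * hc1 i
    obtain ⟨σ, hσmono⟩ : ∃ σ : Equiv.Perm (Fin 4), StrictMono (fun j => p (σ j) 1) :=
      ⟨Tuple.sort (fun i => p i 1),
        (Tuple.monotone_sort (fun i => p i 1)).strictMono_of_injective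
          (hyinj.comp (Tuple.sort (fun i => p i 1)).injective)⟩
    obtain ⟨z0, hz0⟩ : ∃ t, p (σ 0) 1 = t := ⟨_, rfl⟩
    obtain ⟨z1, hz1⟩ : ∃ t, p (σ 1) 1 = t := ⟨_, rfl⟩
    obtain ⟨z2, hz2⟩ : ∃ t, p (σ 2) 1 = t := ⟨_, rfl⟩
    obtain ⟨z3, hz3⟩ : ∃ t, p (σ 3) 1 = t := ⟨_, rfl⟩
    have h01 : z0 < z1 := by
      simpa only [hz0, hz1] using hσmono (show (0 : Fin 4) < 1 by decide)
    have h12 : z1 < z2 := by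
      simpa only [hz1, hz2] using hσmono (show (1 : Fin 4) < 2 by decide)
    have h23 : z2 < z3 := by
      simpa only [hz2, hz3] using hσmono (show (2 : Fin 4) < 3 by decide)
    have h02 : z0 < z2 := lt_trans h01 h12
    have h03 : z0 < z3 := lt_trans h02 h23
    have h13 : z1 < z3 := lt_trans h12 h23
    have hz0ne : z0 ≠ 0 := by have h := hy0 (σ 0); rwa [hz0] at h
    have hz1ne : z1 ≠ 0 := by have h := hy0 (σ 1); rwa [hz1] at h
    have hz2ne : z2 ≠ 0 := by have h := hy0 (σ 2); rwa [hz2] at h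
    have hz3ne : z3 ≠ 0 := by have h := hy0 (σ 3); rwa [hz3] at h
    have hQ0 : 12 * z0 ^ 4 - 8 * c * z0 ^ 3 - 4 * b * z0 ^ 2 - a ^ 2 = 0 := by
      have h := hQ (σ 0); rwa [hz0] at h
    have hQ1 : 12 * z1 ^ 4 - 8 * c * z1 ^ 3 - 4 * b * z1 ^ 2 - a ^ 2 = 0 := by
      have h := hQ (σ 1); rwa [hz1] at h
    have hQ2 : 12 * z2 ^ 4 - 8 * c * z2 ^ 3 - 4 * b * z2 ^ 2 - a ^ 2 = 0 := by
      have h := hQ (σ 2); rwa [hz2] at h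
    have hQ3 : 12 * z3 ^ 4 - 8 * c * z3 ^ 3 - 4 * b * z3 ^ 2 - a ^ 2 = 0 := by
      have h := hQ (σ 3); rwa [hz3] at h
    have hcσ0 : p (σ 0) 0 = (-a / 2) / z0 := by have h := hcoord (σ 0); rwa [hz0] at h
    have hcσ1 : p (σ 1) 0 = (-a / 2) / z1 := by have h := hcoord (σ 1); rwa [hz1] at h
    have hcσ2 : p (σ 2) 0 = (-a / 2) / z2 := by have h := hcoord (σ 2); rwa [hz2] at h
    have hcσ3 : p (σ 3) 0 = (-a / 2) / z3 := by have h := hcoord (σ 3); rwa [hz3] at h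
    -- Vieta
    obtain ⟨hE1, hE2, hE3, hE4⟩ :=
      PM4.cubic_vanish (α := 12 * (z0 + z1 + z2 + z3) - 8 * c)
        (β := -(4 * b) - 12 * (z0 * z1 + z0 * z2 + z0 * z3 + z1 * z2 + z1 * z3 + z2 * z3))
        (γ := 12 * (z0 * z1 * z2 + z0 * z1 * z3 + z0 * z2 * z3 + z1 * z2 * z3))
        (δ := -(a ^ 2) - 12 * (z0 * z1 * z2 * z3))
        (ne_of_lt h01) (ne_of_lt h02) (ne_of_lt h03) (ne_of_lt h12) (ne_of_lt h13)
        (ne_of_lt h23)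
        (by linear_combination hQ0) (by linear_combination hQ1)
        (by linear_combination hQ2) (by linear_combination hQ3)
    have hprodz : z0 * z1 * z2 * z3 < 0 := by nlinarith
    have key0 : 2 * z0 * (b + 3 * c * z0 - 6 * z0 ^ 2)
        = -3 * (z0 - z1) * (z0 - z2) * (z0 - z3) := by
      linear_combination (-3/4 * z0 ^ 2) * hE1 + (-z0/2) * hE2 + (-1/4) * hE3
    have key1 : 2 * z1 * (b + 3 * c * z1 - 6 * z1 ^ 2)
        = -3 * (z1 - z0) * (z1 - z2) * (z1 - z3) := by
      linear_combination (-3/4 * z1 ^ 2) * hE1 + (-z1/2) * hE2 + (-1/4) * hE3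
    have key2 : 2 * z2 * (b + 3 * c * z2 - 6 * z2 ^ 2)
        = -3 * (z2 - z0) * (z2 - z1) * (z2 - z3) := by
      linear_combination (-3/4 * z2 ^ 2) * hE1 + (-z2/2) * hE2 + (-1/4) * hE3
    have key3 : 2 * z3 * (b + 3 * c * z3 - 6 * z3 ^ 2)
        = -3 * (z3 - z0) * (z3 - z1) * (z3 - z2) := by
      linear_combination (-3/4 * z3 ^ 2) * hE1 + (-z3/2) * hE2 + (-1/4) * hE3
    -- completeness
    have comp : ∀ q, IsCriticalPt2 (phiMinus a b c) q → ∃ k, q = p k := by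
      intro q hq
      have hq1 := PM4.crit1 hq
      have hq2 := PM4.crit2 hq
      have hq1ne : q 1 ≠ 0 := fun h => ha (by rw [h] at hq1; linarith)
      have hq0 : q 0 = (-a / 2) / q 1 := by rw [eq_div_iff hq1ne]; linarith
      have hQq : 12 * (q 1) ^ 4 - 8 * c * (q 1) ^ 3 - 4 * b * (q 1) ^ 2 - a ^ 2 = 0 := by
        linear_combination (-4 * (q 1) ^ 2) * hq2 + (2 * q 0 * q 1 - a) * hq1
      have h12' : 12 * ((q 1 - z0) * (q 1 - z1) * (q 1 - z2) * (q 1 - z3)) = 0 := by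
        linear_combination hQq + (-(q 1) ^ 3) * hE1 + (-(q 1) ^ 2) * hE2 +
          (-(q 1)) * hE3 + (-1) * hE4
      have hfac : (q 1 - z0) * (q 1 - z1) * (q 1 - z2) * (q 1 - z3) = 0 := by linarith
      have mkpt : ∀ j : Fin 4, q 1 = p (σ j) 1 → q = p (σ j) := by
        intro j hj
        refine PM4.pt_eq ?_ hj
        rw [hq0, hcoord (σ j), hj]
      rcases mul_eq_zero.mp hfac with h' | h'
      · rcases mul_eq_zero.mp h' with h'' | h''
        · rcases mul_eq_zero.mp h'' with h''' | h'''
          · exact ⟨σ 0, mkpt 0 (by rw [hz0]; linarith)⟩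
          · exact ⟨σ 1, mkpt 1 (by rw [hz1]; linarith)⟩
        · exact ⟨σ 2, mkpt 2 (by rw [hz2]; linarith)⟩
      · exact ⟨σ 3, mkpt 3 (by rw [hz3]; linarith)⟩
    refine ⟨comp, ?_⟩
    rcases hz1ne.lt_or_gt with hz1n | hz1p
    · -- case B : z0 < z1 < z2 < 0 < z3, extremum at σ 1
      have hz0n : z0 < 0 := lt_trans h01 hz1n
      have hz2n : z2 < 0 := by
        rcases hz2ne.lt_or_gt with h | h
        · exact h
        · exfalso
          nlinarith [mul_pos_of_neg_of_neg hz0n hz1n, mul_pos h (lt_trans h h23)]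
      have hz3p : 0 < z3 := by
        rcases hz3ne.lt_or_gt with h | h
        · exfalso
          nlinarith [mul_pos_of_neg_of_neg hz0n hz1n, mul_pos_of_neg_of_neg hz2n h]
        · exact h
      have hval0 : b + 3 * c * z0 - 6 * z0 ^ 2 < 0 :=
        PM4.hneg_of_neg hz0n
          (mul_pos_of_neg_of_neg
            (mul_neg_of_pos_of_neg (by linarith : (0:ℝ) < -3 * (z0 - z1)) (by linarith))
            (by linarith)) key0
      have hval1 : 0 < b + 3 * c * z1 - 6 * z1 ^ 2 :=
        PM4.hpos_of_neg hz1n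
          (mul_neg_of_pos_of_neg
            (mul_pos_of_neg_of_neg (by linarith : -3 * (z1 - z0) < 0) (by linarith))
            (by linarith)) key1
      have hval2 : b + 3 * c * z2 - 6 * z2 ^ 2 < 0 :=
        PM4.hneg_of_neg hz2n
          (mul_pos_of_neg_of_neg
            (mul_neg_of_neg_of_pos (by linarith : -3 * (z2 - z0) < 0) (by linarith))
            (by linarith)) key2
      have hval3 : b + 3 * c * z3 - 6 * z3 ^ 2 < 0 :=
        PM4.hneg_of_pos hz3p
          (mul_neg_of_neg_of_pos
            (mul_neg_of_neg_of_pos (by linarith : -3 * (z3 - z0) < 0) (by linarith))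
            (by linarith)) key3
      have t1 : 0 < z0 * (z1 - z2) * (z1 - z3) / (z1 * (z0 - z2) * (z0 - z3)) := by
        apply div_pos_iff.mpr
        refine Or.inr ⟨?_, ?_⟩
        · exact mul_neg_of_pos_of_neg
            (mul_pos_of_neg_of_neg hz0n (by linarith)) (by linarith)
        · exact mul_neg_of_pos_of_neg
            (mul_pos_of_neg_of_neg hz1n (by linarith)) (by linarith)
      have t2 : 0 < z2 * (z1 - z0) * (z1 - z3) / (z1 * (z2 - z0) * (z2 - z3)) := by
        apply div_pos
        · exact mul_pos_of_neg_of_neg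
            (mul_neg_of_neg_of_pos hz2n (by linarith)) (by linarith)
        · exact mul_pos_of_neg_of_neg
            (mul_neg_of_neg_of_pos hz1n (by linarith)) (by linarith)
      have t3 : 0 < z3 * (z1 - z0) * (z1 - z2) / (z1 * (z3 - z0) * (z3 - z2)) := by
        apply div_pos_iff.mpr
        refine Or.inr ⟨?_, ?_⟩
        · exact mul_neg_of_pos_of_neg (mul_pos hz3p (by linarith)) (by linarith)
        · exact mul_neg_of_neg_of_pos
            (mul_neg_of_neg_of_pos hz1n (by linarith)) (by linarith)
      have gd : PM4Good (p (σ 1)) (p (σ 0)) (p (σ 2)) (p (σ 3)) :=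
        PM4.hyper_good hcσ1 hz1 hcσ0 hz0 hcσ2 hz2 hcσ3 hz3 hκ hz1ne hz0ne hz2ne hz3ne
          (sub_ne_zero.mpr (ne_of_lt h02)) (sub_ne_zero.mpr (ne_of_lt h03))
          (sub_ne_zero.mpr (ne_of_lt h23)) t1 t2 t3
      have mem : ∀ i : Fin 4, i = σ 1 ∨ i = σ 0 ∨ i = σ 2 ∨ i = σ 3 := by
        intro i
        obtain ⟨j, hj⟩ := σ.surjective i
        fin_cases j
        · exact Or.inr (Or.inl hj.symm)
        · exact Or.inl hj.symm
        · exact Or.inr (Or.inr (Or.inl hj.symm))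
        · exact Or.inr (Or.inr (Or.inr hj.symm))
      have hvk : 0 < b + 3 * c * (p (σ 1) 1) - 6 * (p (σ 1) 1) ^ 2 := by
        rw [hz1]; exact hval1
      have hs1 : b + 3 * c * (p (σ 0) 1) - 6 * (p (σ 0) 1) ^ 2 < 0 := by
        rw [hz0]; exact hval0
      have hs2 : b + 3 * c * (p (σ 2) 1) - 6 * (p (σ 2) 1) ^ 2 < 0 := by
        rw [hz2]; exact hval2
      have hs3 : b + 3 * c * (p (σ 3) 1) - 6 * (p (σ 3) 1) ^ 2 < 0 := by
        rw [hz3]; exact hval3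
      exact PM4.endgame a b c p hcrit (σ 1) (σ 0) (σ 2) (σ 3) mem hvk hs1 hs2 hs3 gd
    · -- case A : z0 < 0 < z1 < z2 < z3, extremum at σ 2
      have hz2p : 0 < z2 := lt_trans hz1p h12
      have hz3p : 0 < z3 := lt_trans hz2p h23
      have hz0n : z0 < 0 := by
        rcases hz0ne.lt_or_gt with h | h
        · exact h
        · exfalso; nlinarith [mul_pos (mul_pos h hz1p) hz2p]
      have hval0 : b + 3 * c * z0 - 6 * z0 ^ 2 < 0 :=
        PM4.hneg_of_neg hz0n
          (mul_pos_of_neg_of_neg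
            (mul_neg_of_pos_of_neg (by linarith : (0:ℝ) < -3 * (z0 - z1)) (by linarith))
            (by linarith)) key0
      have hval1 : b + 3 * c * z1 - 6 * z1 ^ 2 < 0 :=
        PM4.hneg_of_pos hz1p
          (mul_neg_of_pos_of_neg
            (mul_pos_of_neg_of_neg (by linarith : -3 * (z1 - z0) < 0) (by linarith))
            (by linarith)) key1
      have hval2 : 0 < b + 3 * c * z2 - 6 * z2 ^ 2 :=
        PM4.hpos_of_pos hz2p
          (mul_pos_of_neg_of_neg
            (mul_neg_of_neg_of_pos (by linarith : -3 * (z2 - z0) < 0) (by linarith))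
            (by linarith)) key2
      have hval3 : b + 3 * c * z3 - 6 * z3 ^ 2 < 0 :=
        PM4.hneg_of_pos hz3p
          (mul_neg_of_neg_of_pos
            (mul_neg_of_neg_of_pos (by linarith : -3 * (z3 - z0) < 0) (by linarith))
            (by linarith)) key3
      have t1 : 0 < z0 * (z2 - z1) * (z2 - z3) / (z2 * (z0 - z1) * (z0 - z3)) := by
        apply div_pos
        · exact mul_pos_of_neg_of_neg
            (mul_neg_of_neg_of_pos hz0n (by linarith)) (by linarith)
        · exact mul_pos_of_neg_of_neg
            (mul_neg_of_pos_of_neg hz2p (by linarith)) (by linarith)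
      have t2 : 0 < z1 * (z2 - z0) * (z2 - z3) / (z2 * (z1 - z0) * (z1 - z3)) := by
        apply div_pos_iff.mpr
        refine Or.inr ⟨?_, ?_⟩
        · exact mul_neg_of_pos_of_neg (mul_pos hz1p (by linarith)) (by linarith)
        · exact mul_neg_of_pos_of_neg (mul_pos hz2p (by linarith)) (by linarith)
      have t3 : 0 < z3 * (z2 - z0) * (z2 - z1) / (z2 * (z3 - z0) * (z3 - z1)) := by
        apply div_pos
        · exact mul_pos (mul_pos hz3p (by linarith)) (by linarith)
        · exact mul_pos (mul_pos hz2p (by linarith)) (by linarith)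
      have gd : PM4Good (p (σ 2)) (p (σ 0)) (p (σ 1)) (p (σ 3)) :=
        PM4.hyper_good hcσ2 hz2 hcσ0 hz0 hcσ1 hz1 hcσ3 hz3 hκ hz2ne hz0ne hz1ne hz3ne
          (sub_ne_zero.mpr (ne_of_lt h01)) (sub_ne_zero.mpr (ne_of_lt h03))
          (sub_ne_zero.mpr (ne_of_lt h13)) t1 t2 t3
      have mem : ∀ i : Fin 4, i = σ 2 ∨ i = σ 0 ∨ i = σ 1 ∨ i = σ 3 := by
        intro i
        obtain ⟨j, hj⟩ := σ.surjective i
        fin_cases j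
        · exact Or.inr (Or.inl hj.symm)
        · exact Or.inr (Or.inr (Or.inl hj.symm))
        · exact Or.inl hj.symm
        · exact Or.inr (Or.inr (Or.inr hj.symm))
      have hvk : 0 < b + 3 * c * (p (σ 2) 1) - 6 * (p (σ 2) 1) ^ 2 := by
        rw [hz2]; exact hval2
      have hs1 : b + 3 * c * (p (σ 0) 1) - 6 * (p (σ 0) 1) ^ 2 < 0 := by
        rw [hz0]; exact hval0
      have hs2 : b + 3 * c * (p (σ 1) 1) - 6 * (p (σ 1) 1) ^ 2 < 0 := by
        rw [hz1]; exact hval1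
      have hs3 : b + 3 * c * (p (σ 3) 1) - 6 * (p (σ 3) 1) ^ 2 < 0 := by
        rw [hz3]; exact hval3
      exact PM4.endgame a b c p hcrit (σ 2) (σ 0) (σ 1) (σ 3) mem hvk hs1 hs2 hs3 gd
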